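/- Let (T⊛, T⊚) be a latin bitrade with permutations τ₁ = β₂⁻¹β₃, τ₂ = β₃⁻¹β₁, τ₃ = β₁⁻¹β₂ of T⊛. Then condition (T2) holds: for all 1 ≤ i < j ≤ 3 and distinct points x ≠ y of T⊛, it is not the case that x and y lie in the same cycle of τ_i and also in the same cycle of τ_j. (Equivalently, any cycle of τ_i and any cycle of τ_j move at most one common point.) -/

import Mathlib

/-- `Agree2 r a b` says that the triples `a` and `b` agree in the two
coordinates other than `r` (coordinates indexed by `Fin 3`). -/
def Agree2 {A₁ A₂ A₃ : Type*} (r : Fin 3) (a b : A₁ × A₂ × A₃) : Prop :=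
  if r = 0 then a.2.1 = b.2.1 ∧ a.2.2 = b.2.2
  else if r = 1 then a.1 = b.1 ∧ a.2.2 = b.2.2
  else a.1 = b.1 ∧ a.2.1 = b.2.1

/-- `CoordNe r a b` says that the triples `a` and `b` differ in coordinate `r`. -/
def CoordNe {A₁ A₂ A₃ : Type*} (r : Fin 3) (a b : A₁ × A₂ × A₃) : Prop :=
  if r = 0 then a.1 ≠ b.1
  else if r = 1 then a.2.1 ≠ b.2.1
  else a.2.2 ≠ b.2.2

/-- A partial latin square: any two triples agreeing in two coordinates are equal. -/
def IsPLS {A₁ A₂ A₃ : Type*} (T : Set (A₁ × A₂ × A₃)) : Prop :=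
  ∀ a ∈ T, ∀ b ∈ T, ∀ r : Fin 3, Agree2 r a b → a = b

/-- A latin bitrade `(T₁, T₂)`: two disjoint partial latin squares such that each triple
of one is matched, for each pair of coordinates, by a unique triple of the other
agreeing in those two coordinates. -/
structure IsBitrade {A₁ A₂ A₃ : Type*} (T₁ T₂ : Set (A₁ × A₂ × A₃)) : Prop where
  pls₁ : IsPLS T₁
  pls₂ : IsPLS T₂
  disj : T₁ ∩ T₂ = ∅
  r2 : ∀ a ∈ T₁, ∀ r : Fin 3, ∃! b, b ∈ T₂ ∧ Agree2 r a b
  r3 : ∀ a ∈ T₂, ∀ r : Fin 3, ∃! b, b ∈ T₁ ∧ Agree2 r a b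

/-- A function invariant under a permutation is constant on its cycles. -/
lemma sameCycle_invariant {α γ : Type*} (σ : Equiv.Perm α) (f : α → γ)
    (hf : ∀ x, f (σ x) = f x) {x y : α} (hxy : σ.SameCycle x y) : f x = f y := by
  obtain ⟨n, rfl⟩ := hxy
  have hinv : ∀ z, f (σ⁻¹ z) = f z := by
    intro z
    have := hf (σ⁻¹ z)
    simpa using this.symm
  induction n using Int.induction_on with
  | zero => simp
  | succ k ih =>
      have hp : σ ^ ((k : ℤ) + 1) = σ * σ ^ (k : ℤ) := by
        rw [add_comm, zpow_add, zpow_one]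
      rw [hp, Equiv.Perm.mul_apply, hf, ← ih]
  | pred k ih =>
      have hp : σ ^ (-(k : ℤ) - 1) = σ⁻¹ * σ ^ (-(k : ℤ)) := by
        rw [sub_eq_add_neg, add_comm, zpow_add, zpow_neg_one]
      rw [hp, Equiv.Perm.mul_apply, hinv, ← ih]

/-- Given a latin bitrade with its bijections `β₁, β₂, β₃ : T⊚ → T⊛`,
the permutations `τ₁ = β₂⁻¹β₃`, `τ₂ = β₃⁻¹β₁`, `τ₃ = β₁⁻¹β₂` of `T⊛` (composed left to
right) satisfy (T2): for `i < j`, no two distinct points lie simultaneously in one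
cycle of `τ_i` and in one cycle of `τ_j`. -/
theorem tau_T2 {A₁ A₂ A₃ : Type*} [Finite A₁] [Finite A₂] [Finite A₃]
    {T₁ T₂ : Set (A₁ × A₂ × A₃)} (h : IsBitrade T₁ T₂)
    (β : Fin 3 → (T₂ ≃ T₁))
    (hβ : ∀ r : Fin 3, ∀ a : T₂, Agree2 r a.val ((β r) a).val)
    (τ : Fin 3 → Equiv.Perm T₁)
    (hτ₁ : τ 0 = (β 1).symm.trans (β 2))
    (hτ₂ : τ 1 = (β 2).symm.trans (β 0))
    (hτ₃ : τ 2 = (β 0).symm.trans (β 1)) :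
    ∀ i j : Fin 3, i < j → ∀ x y : T₁, x ≠ y →
      ¬((τ i).SameCycle x y ∧ (τ j).SameCycle x y) := by
  have hc0 : ∀ x : ↥T₁, ((τ 0) x).val.1 = x.val.1 := by
    intro x
    have h1 := hβ 1 ((β 1).symm x)
    have h2 := hβ 2 ((β 1).symm x)
    simp only [Agree2, Equiv.apply_symm_apply] at h1 h2
    norm_num at h1 h2
    rw [hτ₁]
    simp only [Equiv.trans_apply]
    rw [← h2.1, ← h1.1]
  have hc1 : ∀ x : ↥T₁, ((τ 1) x).val.2.1 = x.val.2.1 := by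
    intro x
    have h1 := hβ 2 ((β 2).symm x)
    have h2 := hβ 0 ((β 2).symm x)
    simp only [Agree2, Equiv.apply_symm_apply] at h1 h2
    norm_num at h1 h2
    rw [hτ₂]
    simp only [Equiv.trans_apply]
    rw [← h2.1, ← h1.2]
  have hc2 : ∀ x : ↥T₁, ((τ 2) x).val.2.2 = x.val.2.2 := by
    intro x
    have h1 := hβ 0 ((β 0).symm x)
    have h2 := hβ 1 ((β 0).symm x)
    simp only [Agree2, Equiv.apply_symm_apply] at h1 h2
    norm_num at h1 h2
    rw [hτ₃]
    simp only [Equiv.trans_apply]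
    rw [← h2.2, ← h1.2]
  intro i j hij x y hxy hc
  obtain ⟨hi, hj⟩ := hc
  have key : ∀ r : Fin 3, Agree2 r x.val y.val → False := by
    intro r hr
    exact hxy (Subtype.ext (h.pls₁ x.val x.2 y.val y.2 r hr))
  fin_cases i <;> fin_cases j <;> (try exact absurd hij (by decide))
  · -- i = 0, j = 1
    have e0 := sameCycle_invariant (τ 0) (fun z => z.val.1) hc0 hi
    have e1 := sameCycle_invariant (τ 1) (fun z => z.val.2.1) hc1 hj
    exact key 2 (by simp only [Agree2]; exact ⟨e0, e1⟩)
  · -- i = 0, j = 2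
    have e0 := sameCycle_invariant (τ 0) (fun z => z.val.1) hc0 hi
    have e2 := sameCycle_invariant (τ 2) (fun z => z.val.2.2) hc2 hj
    exact key 1 (by simp only [Agree2]; norm_num; exact ⟨e0, e2⟩)
  · -- i = 1, j = 2
    have e1 := sameCycle_invariant (τ 1) (fun z => z.val.2.1) hc1 hi
    have e2 := sameCycle_invariant (τ 2) (fun z => z.val.2.2) hc2 hj
    exact key 0 (by simp only [Agree2]; norm_num; exact ⟨e1, e2⟩)
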